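/- arXiv:2105.14443 — 2 statements merged into one kernel-verified Lean document; each statement's English description precedes it below -/
import Mathlib

section
/- The transformation T from Cartesian variables (x,y,X,Y) to epicyclic variables (φ,q,Φ,Q) defined by x = 2bξ + b sin φ, y = aη + a cos φ, X = −2Bη − B cos φ, Y = −Bξ − B sin φ, with a = 2b, B = bω, b = √(2Φ/ω), ξ = Q/(2kB), η = 2kq/a, is canonical; i.e., it preserves the symplectic form dx∧dX + dy∧dY = dφ∧dΦ + dq∧dQ. -/
open Real

noncomputable section

/-- Partial derivatives of a function of four real variables, slot by slot. -/
def pd1 (f : ℝ → ℝ → ℝ → ℝ → ℝ) (a b c d : ℝ) : ℝ := deriv (fun t => f t b c d) a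
def pd2 (f : ℝ → ℝ → ℝ → ℝ → ℝ) (a b c d : ℝ) : ℝ := deriv (fun t => f a t c d) b
def pd3 (f : ℝ → ℝ → ℝ → ℝ → ℝ) (a b c d : ℝ) : ℝ := deriv (fun t => f a b t d) c
def pd4 (f : ℝ → ℝ → ℝ → ℝ → ℝ) (a b c d : ℝ) : ℝ := deriv (fun t => f a b c t) d

/-- Poisson bracket with respect to the canonical pairs (φ,Φ) (slots 1,3) and
(q,Q) (slots 2,4); the bracket conditions `{x,X}=1`, `{y,Y}=1`, all other brackets
zero, are equivalent to preservation of the symplectic form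
`dx∧dX + dy∧dY = dφ∧dΦ + dq∧dQ`. -/
def pb (f g : ℝ → ℝ → ℝ → ℝ → ℝ) (a b c d : ℝ) : ℝ :=
  pd1 f a b c d * pd3 g a b c d - pd3 f a b c d * pd1 g a b c d
  + pd2 f a b c d * pd4 g a b c d - pd4 f a b c d * pd2 g a b c d

/-- `b = √(2Φ/ω)`. -/
def bb (ω Φ : ℝ) : ℝ := Real.sqrt (2*Φ/ω)
/-- `ξ = Q/(2kωb)` (with `B = bω`, this is `Q/(2kB)`). -/
def xiF (ω k Φ Q : ℝ) : ℝ := Q / (2*k*ω*bb ω Φ)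
/-- `η = kq/b` (with `a = 2b`, this is `2kq/a`). -/
def etaF (ω k q Φ : ℝ) : ℝ := k*q / bb ω Φ

/-- `x = 2bξ + b sin φ`. -/
def xF (ω k : ℝ) (φ q Φ Q : ℝ) : ℝ := 2*bb ω Φ*xiF ω k Φ Q + bb ω Φ * Real.sin φ
/-- `y = aη + a cos φ` with `a = 2b`. -/
def yF (ω k : ℝ) (φ q Φ Q : ℝ) : ℝ := 2*bb ω Φ*etaF ω k q Φ + 2*bb ω Φ * Real.cos φ
/-- `X = −2Bη − B cos φ` with `B = bω`. -/
def XF (ω k : ℝ) (φ q Φ Q : ℝ) : ℝ := -(2*(bb ω Φ*ω)*etaF ω k q Φ) - (bb ω Φ*ω) * Real.cos φ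
/-- `Y = −Bξ − B sin φ` with `B = bω`. -/
def YF (ω k : ℝ) (φ q Φ Q : ℝ) : ℝ := -((bb ω Φ*ω)*xiF ω k Φ Q) - (bb ω Φ*ω) * Real.sin φ

/- Auxiliary derivative lemmas. -/

lemma d_sin (c m x : ℝ) : deriv (fun t => c + m * Real.sin t) x = m * Real.cos x :=
  (((Real.hasDerivAt_sin x).const_mul m).const_add c).deriv

lemma d_cos (c m x : ℝ) : deriv (fun t => c + m * Real.cos t) x = -(m * Real.sin x) := by
  have := (((Real.hasDerivAt_cos x).const_mul m).const_add c).deriv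
  simpa [mul_comm] using this

lemma d_sub_cos (c m x : ℝ) : deriv (fun t => c - m * Real.cos t) x = m * Real.sin x := by
  have h : HasDerivAt (fun t => c - m * Real.cos t) (-(m * (-Real.sin x))) x :=
    ((Real.hasDerivAt_cos x).const_mul m).const_sub c
  simpa using h.deriv

lemma d_sub_sin (c m x : ℝ) : deriv (fun t => c - m * Real.sin t) x = -(m * Real.cos x) := by
  have h : HasDerivAt (fun t => c - m * Real.sin t) (-(m * Real.cos x)) x :=
    ((Real.hasDerivAt_sin x).const_mul m).const_sub c
  simpa using h.deriv

lemma d_lin (A B C D x : ℝ) : deriv (fun t => A * (B * t / C) + D) x = A * (B / C) := by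
  have h1 : HasDerivAt (fun t : ℝ => B * t / C) (B / C) x := by
    simpa using (((hasDerivAt_id x).const_mul B).div_const C)
  exact ((h1.const_mul A).add_const D).deriv

lemma d_lin2 (A C D x : ℝ) : deriv (fun t => A * (t / C) + D) x = A * (1 / C) := by
  have h1 : HasDerivAt (fun t : ℝ => t / C) (1 / C) x := by
    simpa using ((hasDerivAt_id x).div_const C)
  exact ((h1.const_mul A).add_const D).deriv

lemma d_neg_lin (A B C D x : ℝ) : deriv (fun t => -(A * (B * t / C)) - D) x = -(A * (B / C)) := by
  have h1 : HasDerivAt (fun t : ℝ => B * t / C) (B / C) x := by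
    simpa using (((hasDerivAt_id x).const_mul B).div_const C)
  exact (((h1.const_mul A).neg).sub_const D).deriv

lemma d_neg_lin2 (A C D x : ℝ) : deriv (fun t => -(A * (t / C)) - D) x = -(A * (1 / C)) := by
  have h1 : HasDerivAt (fun t : ℝ => t / C) (1 / C) x := by
    simpa using ((hasDerivAt_id x).div_const C)
  exact (((h1.const_mul A).neg).sub_const D).deriv

lemma bb_pos (ω Φ : ℝ) (hω : 0 < ω) (hΦ : 0 < Φ) : 0 < bb ω Φ :=
  Real.sqrt_pos.mpr (by positivity)

lemma bb_deriv (ω Φ : ℝ) (hω : 0 < ω) (hΦ : 0 < Φ) :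
    HasDerivAt (bb ω) (1/(ω * bb ω Φ)) Φ := by
  have hne : (2*Φ/ω) ≠ 0 := by positivity
  have h1 : HasDerivAt (fun t : ℝ => 2*t/ω) (2/ω) Φ := by
    simpa using (((hasDerivAt_id Φ).const_mul 2).div_const ω)
  have h2 := (Real.hasDerivAt_sqrt hne).comp Φ h1
  have hb : bb ω Φ ≠ 0 := ne_of_gt (bb_pos ω Φ hω hΦ)
  refine h2.congr_deriv ?_
  rw [bb] at hb ⊢
  field_simp

lemma d_bb (ω Φ : ℝ) (hω : 0 < ω) (hΦ : 0 < Φ) (c m : ℝ) :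
    deriv (fun t => c + bb ω t * m) Φ = 1/(ω * bb ω Φ) * m :=
  (((bb_deriv ω Φ hω hΦ).mul_const m).const_add c).deriv

set_option maxHeartbeats 1000000 in
/-- The transformation to epicyclic variables is canonical: it preserves the
symplectic form `dx∧dX + dy∧dY = dφ∧dΦ + dq∧dQ`, expressed through the
Poisson-bracket conditions with respect to `(φ,q,Φ,Q)`. -/
theorem epicyclic_transformation_canonical (ω k : ℝ) (hω : 0 < ω) (hk : 0 < k)
    (φ q Φ Q : ℝ) (hΦ : 0 < Φ) :
    pb (xF ω k) (XF ω k) φ q Φ Q = 1 ∧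
    pb (yF ω k) (YF ω k) φ q Φ Q = 1 ∧
    pb (xF ω k) (yF ω k) φ q Φ Q = 0 ∧
    pb (xF ω k) (YF ω k) φ q Φ Q = 0 ∧
    pb (XF ω k) (yF ω k) φ q Φ Q = 0 ∧
    pb (XF ω k) (YF ω k) φ q Φ Q = 0 := by
  have hω' : ω ≠ 0 := ne_of_gt hω
  have hk' : k ≠ 0 := ne_of_gt hk
  have hbpos : 0 < bb ω Φ := bb_pos ω Φ hω hΦ
  have hb' : bb ω Φ ≠ 0 := ne_of_gt hbpos
  -- slot 1
  have hx1 : pd1 (xF ω k) φ q Φ Q = bb ω Φ * Real.cos φ := by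
    simp only [pd1, xF]; exact d_sin _ _ _
  have hy1 : pd1 (yF ω k) φ q Φ Q = -(2*bb ω Φ * Real.sin φ) := by
    simp only [pd1, yF]; exact d_cos _ _ _
  have hX1 : pd1 (XF ω k) φ q Φ Q = (bb ω Φ*ω) * Real.sin φ := by
    simp only [pd1, XF]; exact d_sub_cos _ _ _
  have hY1 : pd1 (YF ω k) φ q Φ Q = -((bb ω Φ*ω) * Real.cos φ) := by
    simp only [pd1, YF]; exact d_sub_sin _ _ _
  -- slot 2
  have hx2 : pd2 (xF ω k) φ q Φ Q = 0 := by
    simp [pd2, xF]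
  have hy2 : pd2 (yF ω k) φ q Φ Q = 2*bb ω Φ * (k / bb ω Φ) := by
    simp only [pd2, yF, etaF]; exact d_lin _ _ _ _ _
  have hX2 : pd2 (XF ω k) φ q Φ Q = -(2*(bb ω Φ*ω) * (k / bb ω Φ)) := by
    simp only [pd2, XF, etaF]; exact d_neg_lin _ _ _ _ _
  have hY2 : pd2 (YF ω k) φ q Φ Q = 0 := by
    simp [pd2, YF]
  -- slot 3
  have hmem : Set.Ioi (0:ℝ) ∈ nhds Φ := Ioi_mem_nhds hΦ
  have hbt : ∀ t ∈ Set.Ioi (0:ℝ), bb ω t ≠ 0 := fun t ht =>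
    ne_of_gt (bb_pos ω t hω ht)
  have hx3 : pd3 (xF ω k) φ q Φ Q = 1/(ω * bb ω Φ) * Real.sin φ := by
    have hev : (fun t => xF ω k φ q t Q) =ᶠ[nhds Φ]
        (fun t => Q/(k*ω) + bb ω t * Real.sin φ) := by
      filter_upwards [hmem] with t ht
      have hbn := hbt t ht
      simp only [xF, xiF]
      field_simp
    rw [pd3, hev.deriv_eq]
    exact d_bb ω Φ hω hΦ _ _
  have hy3 : pd3 (yF ω k) φ q Φ Q = 1/(ω * bb ω Φ) * (2*Real.cos φ) := by
    have hev : (fun t => yF ω k φ q t Q) =ᶠ[nhds Φ]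
        (fun t => 2*(k*q) + bb ω t * (2*Real.cos φ)) := by
      filter_upwards [hmem] with t ht
      have hbn := hbt t ht
      simp only [yF, etaF]
      field_simp
    rw [pd3, hev.deriv_eq]
    exact d_bb ω Φ hω hΦ _ _
  have hX3 : pd3 (XF ω k) φ q Φ Q = 1/(ω * bb ω Φ) * (-(ω*Real.cos φ)) := by
    have hev : (fun t => XF ω k φ q t Q) =ᶠ[nhds Φ]
        (fun t => -(2*(k*q)*ω) + bb ω t * (-(ω*Real.cos φ))) := by
      filter_upwards [hmem] with t ht
      have hbn := hbt t ht
      simp only [XF, etaF]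
      field_simp
      ring
    rw [pd3, hev.deriv_eq]
    exact d_bb ω Φ hω hΦ _ _
  have hY3 : pd3 (YF ω k) φ q Φ Q = 1/(ω * bb ω Φ) * (-(ω*Real.sin φ)) := by
    have hev : (fun t => YF ω k φ q t Q) =ᶠ[nhds Φ]
        (fun t => -(Q/(2*k)) + bb ω t * (-(ω*Real.sin φ))) := by
      filter_upwards [hmem] with t ht
      have hbn := hbt t ht
      simp only [YF, xiF]
      field_simp
      ring
    rw [pd3, hev.deriv_eq]
    exact d_bb ω Φ hω hΦ _ _
  -- slot 4
  have hx4 : pd4 (xF ω k) φ q Φ Q = 2*bb ω Φ * (1 / (2*k*ω*bb ω Φ)) := by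
    simp only [pd4, xF, xiF]; exact d_lin2 _ _ _ _
  have hy4 : pd4 (yF ω k) φ q Φ Q = 0 := by
    simp [pd4, yF]
  have hX4 : pd4 (XF ω k) φ q Φ Q = 0 := by
    simp [pd4, XF]
  have hY4 : pd4 (YF ω k) φ q Φ Q = -((bb ω Φ*ω) * (1 / (2*k*ω*bb ω Φ))) := by
    simp only [pd4, YF, xiF]; exact d_neg_lin2 _ _ _ _
  have hpyth : Real.sin φ ^ 2 + Real.cos φ ^ 2 = 1 := Real.sin_sq_add_cos_sq φ
  refine ⟨?_, ?_, ?_, ?_, ?_, ?_⟩ <;>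
    simp only [pb, hx1, hy1, hX1, hY1, hx2, hy2, hX2, hY2,
      hx3, hy3, hX3, hY3, hx4, hy4, hX4, hY4] <;>
    field_simp
  · linear_combination (-1) * hpyth
  · linear_combination 2 * hpyth
  · linear_combination 2 * hpyth
  · ring
  · ring
  · linear_combination (-ω) * hpyth
end
end

section
/- Under the epicyclic transformation x = 2bξ + b sin φ, y = aη + a cos φ, X = −2Bη − B cos φ, Y = −Bξ − B sin φ (with a = 2b, B = bω, b = √(2Φ/ω), ξ = Q/(2kωb), η = kq/b), the quadratic Hamiltonian Q(x,y,X,Y) = ½(X+ωy)² + ½(Y−ωx)² − (3/2)ω²x² becomes ωΦ − (3/8)(Q/k)², independent of φ and q. -/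
open Real

noncomputable section

/-- Under the epicyclic transformation, the Clohessy–Wiltshire quadratic
Hamiltonian `½(X+ωy)² + ½(Y−ωx)² − (3/2)ω²x²` becomes `ωΦ − (3/8)(Q/k)²`,
independent of `φ` and `q`. -/
theorem quadratic_hamiltonian_reduced (ω k : ℝ) (hω : 0 < ω) (hk : 0 < k)
    (φ q Φ Q : ℝ) (hΦ : 0 < Φ) :
    (1/2)*(XF ω k φ q Φ Q + ω * yF ω k φ q Φ Q)^2
      + (1/2)*(YF ω k φ q Φ Q - ω * xF ω k φ q Φ Q)^2
      - (3/2)*ω^2*(xF ω k φ q Φ Q)^2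
      = ω*Φ - (3/8)*(Q/k)^2 := by
  have hb : (0:ℝ) < bb ω Φ := Real.sqrt_pos.mpr (by positivity)
  have hb2 : (bb ω Φ)^2 = 2*Φ/ω := Real.sq_sqrt (by positivity)
  have hbne : bb ω Φ ≠ 0 := ne_of_gt hb
  have hωne : ω ≠ 0 := ne_of_gt hω
  have hkne : k ≠ 0 := ne_of_gt hk
  have hsc := Real.sin_sq_add_cos_sq φ
  unfold XF YF xF yF xiF etaF
  set b := bb ω Φ with hbdef
  have hΦ' : ω * Φ = b^2 * ω^2 / 2 := by
    rw [hb2]; field_simp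
  have hQ : Q / k = 2*ω*b*(Q / (2*k*ω*b)) := by
    field_simp
  rw [hΦ', hQ]
  set ξ := Q / (2*k*ω*b)
  set η := k*q/b
  linear_combination (b^2*ω^2/2) * hsc
end
end
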